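/- Let E be the elliptic curve over ℂ(u) defined by Y² = X³ + (X − u⁶)². Then the points P = (2u³, u⁶ + 2u³) and Q = (−2u³, u⁶ − 2u³) lie on E, and in the group of ℂ(u)-rational points their sum is the 3-torsion point P + Q = (0, −u⁶). -/

import Mathlib

open WeierstrassCurve

/-- The parameter `u` of the base `ℙ¹`, as an element of `ℂ(u)`. -/
noncomputable def uu : RatFunc ℂ := RatFunc.X

/-- Fibration 4: the elliptic curve `Y² = X³ + (X − u⁶)²` over `ℂ(u)`,
i.e. `Y² = X³ + X² − 2u⁶X + u¹²`. -/
noncomputable def W4 : WeierstrassCurve.Affine (RatFunc ℂ) :=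
  { a₁ := 0, a₂ := 1, a₃ := 0, a₄ := -2 * uu ^ 6, a₆ := uu ^ 12 }

instance : CharZero (RatFunc ℂ) :=
  charZero_of_injective_algebraMap (algebraMap ℂ (RatFunc ℂ)).injective

lemma some_congr {F : Type*} [Field F] {W : WeierstrassCurve.Affine F} {x₁ y₁ x₂ y₂ : F}
    (h₁ : W.Nonsingular x₁ y₁) (h₂ : W.Nonsingular x₂ y₂) (hx : x₁ = x₂) (hy : y₁ = y₂) :
    WeierstrassCurve.Affine.Point.some _ _ h₁ = WeierstrassCurve.Affine.Point.some _ _ h₂ := by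
  subst hx; subst hy; rfl

lemma uu_cube_ne_zero : uu ^ 3 ≠ 0 := pow_ne_zero 3 (RatFunc.X_ne_zero)

lemma uu_pow_add : uu ^ 6 + 2 * uu ^ 3 ≠ 0 := by
  have h : uu ^ 6 + 2 * uu ^ 3 =
      (algebraMap (Polynomial ℂ) (RatFunc ℂ)) (Polynomial.X ^ 6 + 2 * Polynomial.X ^ 3) := by
    simp [uu, ← RatFunc.algebraMap_X, map_add, map_mul, map_pow, map_ofNat]
  rw [h]
  apply RatFunc.algebraMap_ne_zero
  intro hzero
  have := congrArg (Polynomial.eval 1) hzero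
  simp at this
  norm_num at this

lemma uu_pow_sub : uu ^ 6 - 2 * uu ^ 3 ≠ 0 := by
  have h : uu ^ 6 - 2 * uu ^ 3 =
      (algebraMap (Polynomial ℂ) (RatFunc ℂ)) (Polynomial.X ^ 6 - 2 * Polynomial.X ^ 3) := by
    simp [uu, ← RatFunc.algebraMap_X, map_sub, map_mul, map_pow, map_ofNat]
  rw [h]
  apply RatFunc.algebraMap_ne_zero
  intro hzero
  have := congrArg (Polynomial.eval (-1)) hzero
  simp at this
  norm_num at this

lemma uu_six_ne_zero : (uu : RatFunc ℂ) ^ 6 ≠ 0 := pow_ne_zero 6 RatFunc.X_ne_zero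

open Classical in
/-- The points `P = (2u³, u⁶ + 2u³)` and `Q = (−2u³, u⁶ − 2u³)` lie on the curve
`Y² = X³ + (X − u⁶)²` over `ℂ(u)`, and their sum is the 3-torsion point `(0, −u⁶)`. -/
theorem fibration4_sum_of_sections :
    ∃ hP : W4.Nonsingular (2 * uu ^ 3) (uu ^ 6 + 2 * uu ^ 3),
      ∃ hQ : W4.Nonsingular (-(2 * uu ^ 3)) (uu ^ 6 - 2 * uu ^ 3),
        ∃ hR : W4.Nonsingular 0 (-(uu ^ 6)),
          WeierstrassCurve.Affine.Point.some _ _ hP + WeierstrassCurve.Affine.Point.some _ _ hQ =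
            WeierstrassCurve.Affine.Point.some _ _ hR ∧
          addOrderOf (WeierstrassCurve.Affine.Point.some _ _ hR) = 3 := by
  have hP : W4.Nonsingular (2 * uu ^ 3) (uu ^ 6 + 2 * uu ^ 3) := by
    rw [Affine.nonsingular_iff, Affine.equation_iff]
    constructor
    · simp only [W4]; ring
    · right
      simp only [W4, Affine.negY]
      intro h
      apply uu_pow_add
      linear_combination h / 2
  have hQ : W4.Nonsingular (-(2 * uu ^ 3)) (uu ^ 6 - 2 * uu ^ 3) := by
    rw [Affine.nonsingular_iff, Affine.equation_iff]
    constructor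
    · simp only [W4]; ring
    · right
      simp only [W4, Affine.negY]
      intro h
      apply uu_pow_sub
      linear_combination h / 2
  have hR : W4.Nonsingular 0 (-(uu ^ 6)) := by
    rw [Affine.nonsingular_iff, Affine.equation_iff]
    constructor
    · simp only [W4]; ring
    · right
      simp only [W4, Affine.negY]
      intro h
      apply uu_six_ne_zero
      linear_combination -h / 2
  refine ⟨hP, hQ, hR, ?_, ?_⟩
  · -- P + Q = R
    have hx : (2 * uu ^ 3 : RatFunc ℂ) ≠ -(2 * uu ^ 3) := by
      intro h
      apply uu_cube_ne_zero
      linear_combination h / 4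
    rw [Affine.Point.add_of_X_ne hx]
    have hslope : W4.slope (2 * uu ^ 3) (-(2 * uu ^ 3)) (uu ^ 6 + 2 * uu ^ 3)
        (uu ^ 6 - 2 * uu ^ 3) = 1 := by
      rw [Affine.slope_of_X_ne hx]
      rw [div_eq_one_iff_eq (by intro h; apply uu_cube_ne_zero; linear_combination h / 4)]
      ring
    apply some_congr
    · rw [hslope]
      simp only [W4, Affine.addX]
      ring
    · rw [Affine.addY, Affine.negAddY, hslope]
      simp only [W4, Affine.addX, Affine.negY]
      ring
  · -- order 3
    set R := WeierstrassCurve.Affine.Point.some _ _ hR with hRdef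
    have hyne : -(uu ^ 6) ≠ W4.negY 0 (-(uu ^ 6)) := by
      simp only [W4, Affine.negY]
      intro h
      apply uu_six_ne_zero
      linear_combination -h / 2
    have hslope : W4.slope 0 0 (-(uu ^ 6)) (-(uu ^ 6)) = 1 := by
      rw [Affine.slope_of_Y_ne rfl hyne]
      simp only [W4, Affine.negY]
      rw [div_eq_one_iff_eq (by intro h; apply uu_six_ne_zero; linear_combination -h / 2)]
      ring
    -- 2R = (0, u⁶)
    have hR2 : W4.Nonsingular 0 (uu ^ 6) := by
      have := (Affine.nonsingular_neg _ _).mpr hR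
      simpa [W4, Affine.negY] using this
    have h2R : R + R = WeierstrassCurve.Affine.Point.some _ _ hR2 := by
      rw [hRdef, Affine.Point.add_self_of_Y_ne hyne]
      apply some_congr
      · rw [hslope]; simp only [W4, Affine.addX]; ring
      · rw [Affine.addY, Affine.negAddY, hslope]
        simp only [W4, Affine.addX, Affine.negY]
        ring
    have h3R : (3 : ℕ) • R = 0 := by
      have h3 : (3 : ℕ) • R = R + R + R := by
        rw [succ_nsmul, two_nsmul]
      rw [h3, h2R, hRdef]
      apply Affine.Point.add_of_Y_eq rfl
      simp only [W4, Affine.negY]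
      ring
    have hRne : R ≠ 0 := by
      rw [hRdef]
      exact fun h => Affine.Point.some_ne_zero _ h
    exact addOrderOf_eq_prime h3R hRne
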